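/- Let m be a positive integer and Y a random variable with E|Y|^m < ∞, and let N(t) := E e^{itY} be its characteristic function. Then there exist complex numbers c₁, c₂ with |c₁| + |c₂| ≤ E|Y|^m and characteristic functions φ₁, φ₂ of (some) random variables such that the m-th derivative of N satisfies N^{(m)} = c₁·φ₁ + c₂·φ₂. -/

import Mathlib

open MeasureTheory Filter Set
open scoped Real Topology NNReal ENNReal

/-- `φ` is the characteristic function of some random variable (i.e., of some probability
distribution on `ℝ`). -/
def IsCharFun (φ : ℝ → ℂ) : Prop :=
  ∃ ν : Measure ℝ, IsProbabilityMeasure ν ∧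
    ∀ t : ℝ, φ t = ∫ x, Complex.exp (Complex.I * t * x) ∂ν

lemma norm_exp_I_mul (t y : ℝ) : ‖Complex.exp (Complex.I * t * y)‖ = 1 := by
  have h : Complex.I * t * y = ((t * y : ℝ) : ℂ) * Complex.I := by push_cast; ring
  rw [h]
  exact Complex.norm_exp_ofReal_mul_I _

lemma pow_abs_integrable {Ω : Type} [MeasurableSpace Ω] (μ : Measure Ω) [IsProbabilityMeasure μ]
    (Y : Ω → ℝ) (hY : Measurable Y) {m n : ℕ} (hn : n ≤ m)
    (hmom : Integrable (fun ω => |Y ω| ^ m) μ) :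
    Integrable (fun ω => |Y ω| ^ n) μ := by
  have hint : Integrable (fun ω => 1 + |Y ω| ^ m) μ := (integrable_const 1).add hmom
  refine hint.mono' ((hY.abs.pow_const n).aestronglyMeasurable) ?_
  filter_upwards with ω
  rw [Real.norm_eq_abs, abs_of_nonneg (pow_nonneg (abs_nonneg _) _)]
  rcases le_or_gt (|Y ω|) 1 with h | h
  · have : |Y ω| ^ n ≤ 1 := pow_le_one₀ (abs_nonneg _) h
    nlinarith [pow_nonneg (abs_nonneg (Y ω)) m]
  · have : |Y ω| ^ n ≤ |Y ω| ^ m := pow_le_pow_right₀ h.le hn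
    linarith

/-- Extracting a characteristic function from a weighted integral against a nonnegative weight. -/
lemma aux_char {Ω : Type} [MeasurableSpace Ω] (μ : Measure Ω)
    (Y : Ω → ℝ) (hY : Measurable Y)
    (g : Ω → ℝ) (hg : Measurable g) (hgnn : ∀ ω, 0 ≤ g ω) (hgi : Integrable g μ) :
    ∃ φ : ℝ → ℂ, IsCharFun φ ∧ ∀ t : ℝ,
      ∫ ω, (g ω : ℂ) * Complex.exp (Complex.I * t * Y ω) ∂μ
        = ((∫ ω, g ω ∂μ : ℝ) : ℂ) * φ t := by
  set a : ℝ := ∫ ω, g ω ∂μ with ha_def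
  have ha0 : 0 ≤ a := integral_nonneg hgnn
  rcases eq_or_lt_of_le ha0 with ha | ha
  · -- a = 0 : then g = 0 a.e., take the dirac char function
    refine ⟨fun t => ∫ x, Complex.exp (Complex.I * t * x) ∂(Measure.dirac (0 : ℝ)),
      ⟨Measure.dirac 0, inferInstance, fun t => rfl⟩, fun t => ?_⟩
    have hg0 : g =ᵐ[μ] 0 := by
      rw [← integral_eq_zero_iff_of_nonneg hgnn hgi]
      exact ha.symm
    have : (fun ω => (g ω : ℂ) * Complex.exp (Complex.I * t * Y ω)) =ᵐ[μ] 0 := by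
      filter_upwards [hg0] with ω hω
      simp [hω]
    rw [integral_congr_ae this]
    simp [← ha]
  · -- a > 0
    set ρ : Measure Ω := μ.withDensity (fun ω => ENNReal.ofReal (g ω)) with hρ_def
    set ν : Measure ℝ := (ENNReal.ofReal a)⁻¹ • Measure.map Y ρ with hν_def
    have hρuniv : ρ Set.univ = ENNReal.ofReal a := by
      rw [hρ_def, withDensity_apply _ MeasurableSet.univ, setLIntegral_univ,
        ← ofReal_integral_eq_lintegral_ofReal hgi (Filter.Eventually.of_forall hgnn)]
    have hmapuniv : (Measure.map Y ρ) Set.univ = ENNReal.ofReal a := by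
      rw [Measure.map_apply hY MeasurableSet.univ, Set.preimage_univ, hρuniv]
    have hprob : IsProbabilityMeasure ν := by
      constructor
      rw [hν_def, Measure.smul_apply, hmapuniv, smul_eq_mul,
        ENNReal.inv_mul_cancel (by simp [ha]) ENNReal.ofReal_ne_top]
    -- the key computation
    have hcomp : ∀ t : ℝ, ∫ x, Complex.exp (Complex.I * t * x) ∂ν
        = a⁻¹ • ∫ ω, (g ω : ℂ) * Complex.exp (Complex.I * t * Y ω) ∂μ := by
      intro t
      have hmeas_exp : AEStronglyMeasurable (fun x : ℝ => Complex.exp (Complex.I * t * x))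
          (Measure.map Y ρ) := by
        apply Continuous.aestronglyMeasurable
        continuity
      rw [hν_def, integral_smul_measure,
        integral_map hY.aemeasurable hmeas_exp]
      have hρ2 : ρ = μ.withDensity (fun ω => ((g ω).toNNReal : ℝ≥0∞)) := rfl
      rw [hρ2, integral_withDensity_eq_integral_smul hg.real_toNNReal]
      rw [ENNReal.toReal_inv, ENNReal.toReal_ofReal ha0]
      congr 1
      apply integral_congr_ae
      filter_upwards with ω
      rw [NNReal.smul_def, Complex.real_smul, Real.coe_toNNReal _ (hgnn ω)]
    refine ⟨fun t => ∫ x, Complex.exp (Complex.I * t * x) ∂ν,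
      ⟨ν, hprob, fun t => rfl⟩, fun t => ?_⟩
    rw [show ((fun t : ℝ => ∫ x, Complex.exp (Complex.I * t * x) ∂ν) t)
        = ∫ x, Complex.exp (Complex.I * t * x) ∂ν from rfl, hcomp t, Complex.real_smul,
      ← mul_assoc, ← Complex.ofReal_mul, mul_inv_cancel₀ ha.ne', Complex.ofReal_one, one_mul]

/-- Proposition: if `E|Y|^m < ∞` and `N` is the characteristic function of `Y`, then `N^{(m)}`
is a linear combination `c₁ φ₁ + c₂ φ₂` of two characteristic functions with
`|c₁| + |c₂| ≤ E|Y|^m`. -/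
theorem stmt6 (m : ℕ) (hm : 0 < m)
    (Ω : Type) (mΩ : MeasurableSpace Ω) (μ : Measure Ω) (hμ : IsProbabilityMeasure μ)
    (Y : Ω → ℝ) (hY : Measurable Y)
    (hmom : Integrable (fun ω => |Y ω| ^ m) μ)
    (N : ℝ → ℂ) (hN : ∀ t : ℝ, N t = ∫ ω, Complex.exp (Complex.I * t * Y ω) ∂μ) :
    ∃ (c₁ c₂ : ℂ) (φ₁ φ₂ : ℝ → ℂ),
      ‖c₁‖ + ‖c₂‖ ≤ (∫ ω, |Y ω| ^ m ∂μ) ∧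
      IsCharFun φ₁ ∧ IsCharFun φ₂ ∧
      ∀ t : ℝ, iteratedDeriv m N t = c₁ * φ₁ t + c₂ * φ₂ t := by
  have hYc : Measurable fun ω => (Y ω : ℂ) := Complex.measurable_ofReal.comp hY
  -- measurability of the integrands
  have hFmeas : ∀ (n : ℕ) (x : ℝ), AEStronglyMeasurable
      (fun ω => (Complex.I * Y ω) ^ n * Complex.exp (Complex.I * x * Y ω)) μ := by
    intro n x
    exact (((measurable_const.mul hYc).pow_const n).mul
      (Complex.measurable_exp.comp (measurable_const.mul hYc))).aestronglyMeasurable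
  -- norm of the integrands
  have hFnorm : ∀ (n : ℕ) (x : ℝ) (ω : Ω),
      ‖(Complex.I * Y ω) ^ n * Complex.exp (Complex.I * x * Y ω)‖ = |Y ω| ^ n := by
    intro n x ω
    rw [norm_mul, norm_pow, norm_exp_I_mul, mul_one, norm_mul,
      Complex.norm_I, Complex.norm_real, Real.norm_eq_abs, one_mul]
  -- integrability of the integrands
  have hFint : ∀ (n : ℕ), n ≤ m → ∀ (x : ℝ), Integrable
      (fun ω => (Complex.I * Y ω) ^ n * Complex.exp (Complex.I * x * Y ω)) μ := by
    intro n hn x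
    refine (pow_abs_integrable μ Y hY hn hmom).mono' (hFmeas n x) ?_
    filter_upwards with ω
    rw [hFnorm n x ω]
  -- the derivative formula
  have key : ∀ n : ℕ, n ≤ m → ∀ t : ℝ,
      iteratedDeriv n N t = ∫ ω, (Complex.I * Y ω) ^ n * Complex.exp (Complex.I * t * Y ω) ∂μ := by
    intro n
    induction n with
    | zero =>
      intro _ t
      simp only [iteratedDeriv_zero, pow_zero, one_mul, hN t]
    | succ n ih =>
      intro hn t
      have hn' : n ≤ m := Nat.le_of_succ_le hn
      have hfun : iteratedDeriv n N
          = fun x : ℝ => ∫ ω, (Complex.I * Y ω) ^ n * Complex.exp (Complex.I * x * Y ω) ∂μ :=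
        funext (ih hn')
      rw [iteratedDeriv_succ, hfun]
      -- differentiate under the integral sign
      have hd : HasDerivAt (fun x : ℝ => ∫ ω, (Complex.I * Y ω) ^ n
            * Complex.exp (Complex.I * x * Y ω) ∂μ)
          (∫ ω, (Complex.I * Y ω) ^ (n + 1) * Complex.exp (Complex.I * t * Y ω) ∂μ) t := by
        have := hasDerivAt_integral_of_dominated_loc_of_deriv_le (μ := μ)
          (F := fun (x : ℝ) ω => (Complex.I * Y ω) ^ n * Complex.exp (Complex.I * x * Y ω))
          (F' := fun (x : ℝ) ω => (Complex.I * Y ω) ^ (n + 1) * Complex.exp (Complex.I * x * Y ω))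
          (bound := fun ω => |Y ω| ^ (n + 1)) (x₀ := t) (Metric.ball_mem_nhds t one_pos)
          (Filter.Eventually.of_forall fun x => hFmeas n x) (hFint n hn' t)
          ((hFmeas (n + 1) t))
          (Filter.Eventually.of_forall fun ω => fun x _ => le_of_eq (hFnorm (n + 1) x ω))
          (pow_abs_integrable μ Y hY hn hmom)
          (Filter.Eventually.of_forall fun ω => fun x _ => ?_)
        · exact this.2
        · -- HasDerivAt of the integrand
          have h0 : HasDerivAt (fun z : ℂ => Complex.exp (Complex.I * z * Y ω))
              (Complex.I * Y ω * Complex.exp (Complex.I * x * Y ω)) (x : ℂ) := by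
            have h1 : HasDerivAt (fun z : ℂ => Complex.I * z * Y ω)
                (Complex.I * Y ω) (x : ℂ) := by
              simpa using (((hasDerivAt_id (x : ℂ)).const_mul Complex.I).mul_const
                ((Y ω : ℂ)))
            simpa [mul_comm] using h1.cexp
          have h2 : HasDerivAt (fun x : ℝ => Complex.exp (Complex.I * x * Y ω))
              (Complex.I * Y ω * Complex.exp (Complex.I * x * Y ω)) x := h0.comp_ofReal
          have h3 := h2.const_mul ((Complex.I * Y ω) ^ n)
          exact h3.congr_deriv (by ring)
      rw [hd.deriv]
  -- the positive and negative parts of Y ^ m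
  set gp : Ω → ℝ := fun ω => max ((Y ω) ^ m) 0 with hgp_def
  set gn : Ω → ℝ := fun ω => max (-(Y ω) ^ m) 0 with hgn_def
  have hgp_meas : Measurable gp := (hY.pow_const m).max measurable_const
  have hgn_meas : Measurable gn := (hY.pow_const m).neg.max measurable_const
  have hgp_nn : ∀ ω, 0 ≤ gp ω := fun ω => le_max_right _ _
  have hgn_nn : ∀ ω, 0 ≤ gn ω := fun ω => le_max_right _ _
  have habs : ∀ ω, gp ω + gn ω = |Y ω| ^ m := by
    intro ω
    simp only [hgp_def, hgn_def]
    rw [← abs_pow]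
    rcases le_total 0 ((Y ω) ^ m) with h | h
    · rw [max_eq_left h, max_eq_right (by linarith), abs_of_nonneg h, add_zero]
    · rw [max_eq_right h, max_eq_left (by linarith), abs_of_nonpos h, zero_add]
  have hsub : ∀ ω, gp ω - gn ω = (Y ω) ^ m := by
    intro ω
    simp only [hgp_def, hgn_def]
    rcases le_or_gt 0 ((Y ω) ^ m) with h | h
    · rw [max_eq_left h, max_eq_right (by linarith), sub_zero]
    · rw [max_eq_right h.le, max_eq_left (by linarith), zero_sub, neg_neg]
  have hgp_le : ∀ ω, |gp ω| ≤ |Y ω| ^ m := by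
    intro ω
    rw [abs_of_nonneg (hgp_nn ω)]
    nlinarith [habs ω, hgn_nn ω]
  have hgn_le : ∀ ω, |gn ω| ≤ |Y ω| ^ m := by
    intro ω
    rw [abs_of_nonneg (hgn_nn ω)]
    nlinarith [habs ω, hgp_nn ω]
  have hgp_int : Integrable gp μ :=
    hmom.mono' hgp_meas.aestronglyMeasurable (Filter.Eventually.of_forall hgp_le)
  have hgn_int : Integrable gn μ :=
    hmom.mono' hgn_meas.aestronglyMeasurable (Filter.Eventually.of_forall hgn_le)
  obtain ⟨φ₁, hφ₁, h₁⟩ := aux_char μ Y hY gp hgp_meas hgp_nn hgp_int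
  obtain ⟨φ₂, hφ₂, h₂⟩ := aux_char μ Y hY gn hgn_meas hgn_nn hgn_int
  set ap : ℝ := ∫ ω, gp ω ∂μ with hap_def
  set an : ℝ := ∫ ω, gn ω ∂μ with han_def
  have hap0 : 0 ≤ ap := integral_nonneg hgp_nn
  have han0 : 0 ≤ an := integral_nonneg hgn_nn
  refine ⟨Complex.I ^ m * ap, -(Complex.I ^ m * an), φ₁, φ₂, ?_, hφ₁, hφ₂, ?_⟩
  · -- the bound on |c₁| + |c₂|
    rw [norm_neg, norm_mul, norm_mul, norm_pow, Complex.norm_I, one_pow, one_mul, one_mul,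
      Complex.norm_real, Complex.norm_real, Real.norm_eq_abs, Real.norm_eq_abs, abs_of_nonneg hap0, abs_of_nonneg han0]
    rw [← integral_add hgp_int hgn_int]
    apply le_of_eq
    exact integral_congr_ae (Filter.Eventually.of_forall fun ω => habs ω)
  · -- the formula for the m-th derivative
    intro t
    rw [key m le_rfl t]
    -- integrability of the pieces
    have hip : Integrable (fun ω => (gp ω : ℂ) * Complex.exp (Complex.I * t * Y ω)) μ := by
      refine hmom.mono' ((Complex.measurable_ofReal.comp hgp_meas).mul
        (Complex.measurable_exp.comp (measurable_const.mul hYc))).aestronglyMeasurable ?_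
      filter_upwards with ω
      rw [norm_mul, norm_exp_I_mul, mul_one, Complex.norm_real, Real.norm_eq_abs]
      exact hgp_le ω
    have hin : Integrable (fun ω => (gn ω : ℂ) * Complex.exp (Complex.I * t * Y ω)) μ := by
      refine hmom.mono' ((Complex.measurable_ofReal.comp hgn_meas).mul
        (Complex.measurable_exp.comp (measurable_const.mul hYc))).aestronglyMeasurable ?_
      filter_upwards with ω
      rw [norm_mul, norm_exp_I_mul, mul_one, Complex.norm_real, Real.norm_eq_abs]
      exact hgn_le ω
    have hsplit : ∫ ω, (Complex.I * Y ω) ^ m * Complex.exp (Complex.I * t * Y ω) ∂μ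
        = Complex.I ^ m * ((∫ ω, (gp ω : ℂ) * Complex.exp (Complex.I * t * Y ω) ∂μ)
          - (∫ ω, (gn ω : ℂ) * Complex.exp (Complex.I * t * Y ω) ∂μ)) := by
      rw [← integral_sub hip hin, ← integral_const_mul]
      apply integral_congr_ae
      filter_upwards with ω
      have : ((Y ω : ℂ)) ^ m = (gp ω : ℂ) - (gn ω : ℂ) := by
        rw [← Complex.ofReal_pow, ← Complex.ofReal_sub]
        exact_mod_cast congrArg (fun r : ℝ => (r : ℂ)) (hsub ω).symm
      rw [mul_pow, this]
      ring
    rw [hsplit, h₁ t, h₂ t]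
    ring
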